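/- Let a < m < b be real numbers, let 0 < d < 2(m−a)(b−m)/(b−a), and let f : [a,b] → ℝ be a continuous concave function. Then the three-point probability measure P* placing masses p₁ = d/(2(m−a)), p₂ = 1 − d/(2(m−a)) − d/(2(b−m)), and p₃ = d/(2(b−m)) at a, m, and b respectively belongs to the MAD ambiguity set 𝒫(a,b,m,d), and for every P ∈ 𝒫(a,b,m,d) one has ∫ f dP ≥ p₁ f(a) + p₂ f(m) + p₃ f(b); that is, P* attains inf_{P ∈ 𝒫(a,b,m,d)} ∫ f dP. -/

import Mathlib

open MeasureTheory

lemma my_integrable_dirac (g : ℝ → ℝ) (x : ℝ) : Integrable g (Measure.dirac x) :=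
  (integrable_const (g x)).congr (ae_eq_dirac g).symm

lemma integral_three (q₁ q₂ q₃ : ℝ) (h₁ : 0 ≤ q₁) (h₂ : 0 ≤ q₂) (h₃ : 0 ≤ q₃)
    (x y z : ℝ) (g : ℝ → ℝ) :
    ∫ ρ, g ρ ∂(ENNReal.ofReal q₁ • Measure.dirac x + ENNReal.ofReal q₂ • Measure.dirac y +
      ENNReal.ofReal q₃ • Measure.dirac z) = q₁ * g x + q₂ * g y + q₃ * g z := by
  have hi : ∀ (c : ℝ) (w : ℝ), Integrable g (ENNReal.ofReal c • Measure.dirac w) :=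
    fun c w => (my_integrable_dirac g w).smul_measure ENNReal.ofReal_ne_top
  rw [integral_add_measure ((hi q₁ x).add_measure (hi q₂ y)) (hi q₃ z),
      integral_add_measure (hi q₁ x) (hi q₂ y),
      integral_smul_measure, integral_smul_measure, integral_smul_measure,
      integral_dirac, integral_dirac, integral_dirac,
      ENNReal.toReal_ofReal h₁, ENNReal.toReal_ofReal h₂, ENNReal.toReal_ofReal h₃]
  simp [smul_eq_mul]

lemma chord_le {a b : ℝ} {f : ℝ → ℝ} (hconc : ConcaveOn ℝ (Set.Icc a b) f)
    {u v x : ℝ} (hu : u ∈ Set.Icc a b) (hv : v ∈ Set.Icc a b) (huv : u < v)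
    (hx1 : u ≤ x) (hx2 : x ≤ v) :
    f v + (f v - f u) / (v - u) * (x - v) ≤ f x := by
  have hvu : (0:ℝ) < v - u := by linarith
  have h := hconc.2 hu hv (div_nonneg (by linarith : (0:ℝ) ≤ v - x) hvu.le)
    (div_nonneg (by linarith : (0:ℝ) ≤ x - u) hvu.le)
    (by field_simp; ring : (v - x)/(v - u) + (x - u)/(v - u) = 1)
  rw [smul_eq_mul, smul_eq_mul, smul_eq_mul, smul_eq_mul] at h
  have hx' : (v - x)/(v - u) * u + (x - u)/(v - u) * v = x := by field_simp; ring
  rw [hx'] at h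
  have heq : f v + (f v - f u)/(v - u) * (x - v)
      = (v - x)/(v - u) * f u + (x - u)/(v - u) * f v := by
    field_simp; ring
  linarith


/-- The MAD ambiguity set: Borel probability measures supported on `[a,b]`
with mean `m` and mean-absolute deviation `d`. -/
def MADSet (a b m d : ℝ) : Set (Measure ℝ) :=
  {P | IsProbabilityMeasure P ∧ P (Set.Icc a b)ᶜ = 0 ∧
    (∫ ρ, ρ ∂P) = m ∧ (∫ ρ, |ρ - m| ∂P) = d}

/-- Ben-Tal–Hochman: for a continuous concave function, the worst-case expectation
over the MAD ambiguity set is attained by the three-point distribution on `{a, m, b}`. -/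
theorem stmt11 (a b m d : ℝ) (ham : a < m) (hmb : m < b)
    (hd0 : 0 < d) (hd : d < 2 * (m - a) * (b - m) / (b - a))
    (f : ℝ → ℝ) (hcont : ContinuousOn f (Set.Icc a b))
    (hconc : ConcaveOn ℝ (Set.Icc a b) f) :
    let p₁ : ℝ := d / (2 * (m - a))
    let p₃ : ℝ := d / (2 * (b - m))
    let p₂ : ℝ := 1 - p₁ - p₃
    let Pstar : Measure ℝ :=
      ENNReal.ofReal p₁ • Measure.dirac a + ENNReal.ofReal p₂ • Measure.dirac m +
        ENNReal.ofReal p₃ • Measure.dirac b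
    Pstar ∈ MADSet a b m d ∧
    (∀ P ∈ MADSet a b m d, p₁ * f a + p₂ * f m + p₃ * f b ≤ ∫ ρ, f ρ ∂P) ∧
    (∫ ρ, f ρ ∂Pstar) = p₁ * f a + p₂ * f m + p₃ * f b := by
  intro p₁ p₃ p₂ Pstar
  have hma : (0:ℝ) < m - a := by linarith
  have hbm : (0:ℝ) < b - m := by linarith
  have hba : (0:ℝ) < b - a := by linarith
  have hp₁ : p₁ = d / (2 * (m - a)) := rfl
  have hp₃ : p₃ = d / (2 * (b - m)) := rfl
  have hp₂ : p₂ = 1 - p₁ - p₃ := rfl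
  have hp₁0 : 0 ≤ p₁ := by rw [hp₁]; positivity
  have hp₃0 : 0 ≤ p₃ := by rw [hp₃]; positivity
  have hkey : d * (b - a) < 2 * (m - a) * (b - m) := by
    have := (lt_div_iff₀ hba).mp hd
    linarith
  have hsum : p₁ + p₃ = d * (b - a) / (2 * (m - a) * (b - m)) := by
    rw [hp₁, hp₃]; field_simp; ring
  have hp₂0 : 0 ≤ p₂ := by
    have h2 : d * (b - a) / (2 * (m - a) * (b - m)) < 1 :=
      (div_lt_one (by positivity)).mpr hkey
    rw [← hsum] at h2
    rw [hp₂]; linarith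
  have hma' : a ∈ Set.Icc a b := ⟨le_refl a, by linarith⟩
  have hmm : m ∈ Set.Icc a b := ⟨ham.le, hmb.le⟩
  have hmb' : b ∈ Set.Icc a b := ⟨by linarith, le_refl b⟩
  -- slopes
  set s₁ : ℝ := (f m - f a) / (m - a) with hs₁
  set s₂ : ℝ := (f b - f m) / (b - m) with hs₂
  set c : ℝ := (s₁ + s₂) / 2 with hc
  set e : ℝ := (s₂ - s₁) / 2 with he
  -- pointwise lower bound
  have hpoint : ∀ x ∈ Set.Icc a b, f m + c * (x - m) + e * |x - m| ≤ f x := by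
    intro x hx
    rcases le_total x m with hxm | hxm
    · have h := chord_le hconc hma' hmm ham hx.1 hxm
      have habs : |x - m| = -(x - m) := abs_of_nonpos (by linarith)
      rw [habs]
      have : f m + c * (x - m) + e * (-(x - m)) = f m + s₁ * (x - m) := by
        rw [hc, he]; ring
      rw [this]
      rw [hs₁]; exact h
    · have h := chord_le hconc hmm hmb' hmb hxm hx.2
      have habs : |x - m| = x - m := abs_of_nonneg (by linarith)
      rw [habs]
      have : f m + c * (x - m) + e * (x - m) = f m + s₂ * (x - m) := by
        rw [hc, he]; ring
      rw [this]
      have hexp : f b + (f b - f m) / (b - m) * (x - b) = f m + s₂ * (x - m) := by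
        rw [hs₂]; field_simp; ring
      linarith [hexp ▸ h]
  -- value identity
  have hval : p₁ * f a + p₂ * f m + p₃ * f b = f m + e * d := by
    rw [hp₂, hp₁, hp₃, he, hs₁, hs₂]; field_simp; ring
  -- clamp
  set φ : ℝ → ℝ := fun x => max a (min x b) with hφ
  have hφcont : Continuous φ := by fun_prop
  have hφmem : ∀ x, φ x ∈ Set.Icc a b :=
    fun x => ⟨le_max_left _ _, max_le (by linarith) (min_le_right _ _)⟩
  have hφeq : ∀ x ∈ Set.Icc a b, φ x = x := by
    intro x hx
    rw [hφ]; simp only [min_eq_left hx.2, max_eq_right hx.1]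
  refine ⟨?_, ?_, ?_⟩
  · -- Pstar ∈ MADSet
    refine ⟨?_, ?_, ?_, ?_⟩
    · constructor
      show Pstar Set.univ = 1
      have : Pstar Set.univ = ENNReal.ofReal p₁ * 1 + ENNReal.ofReal p₂ * 1 +
          ENNReal.ofReal p₃ * 1 := by
        simp [Pstar, Measure.add_apply, Measure.smul_apply, smul_eq_mul]
      rw [this]
      rw [mul_one, mul_one, mul_one, ← ENNReal.ofReal_add hp₁0 hp₂0,
          ← ENNReal.ofReal_add (by linarith) hp₃0]
      have : p₁ + p₂ + p₃ = 1 := by rw [hp₂]; ring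
      rw [this, ENNReal.ofReal_one]
    · have hd1 : Measure.dirac a (Set.Icc a b)ᶜ = 0 := by
        rw [Measure.dirac_apply' _ measurableSet_Icc.compl]
        simp [Set.indicator_of_notMem, hma']
      have hd2 : Measure.dirac m (Set.Icc a b)ᶜ = 0 := by
        rw [Measure.dirac_apply' _ measurableSet_Icc.compl]
        simp [Set.indicator_of_notMem, hmm]
      have hd3 : Measure.dirac b (Set.Icc a b)ᶜ = 0 := by
        rw [Measure.dirac_apply' _ measurableSet_Icc.compl]
        simp [Set.indicator_of_notMem, hmb']
      show Pstar (Set.Icc a b)ᶜ = 0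
      simp [Pstar, Measure.add_apply, Measure.smul_apply, hd1, hd2, hd3]
    · show (∫ ρ, ρ ∂Pstar) = m
      rw [show Pstar = ENNReal.ofReal p₁ • Measure.dirac a + ENNReal.ofReal p₂ • Measure.dirac m +
        ENNReal.ofReal p₃ • Measure.dirac b from rfl,
        integral_three p₁ p₂ p₃ hp₁0 hp₂0 hp₃0 a m b (fun ρ => ρ)]
      rw [hp₂, hp₁, hp₃]; field_simp; ring
    · show (∫ ρ, |ρ - m| ∂Pstar) = d
      rw [show Pstar = ENNReal.ofReal p₁ • Measure.dirac a + ENNReal.ofReal p₂ • Measure.dirac m +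
        ENNReal.ofReal p₃ • Measure.dirac b from rfl,
        integral_three p₁ p₂ p₃ hp₁0 hp₂0 hp₃0 a m b (fun ρ => |ρ - m|)]
      rw [abs_of_neg (by linarith : a - m < 0), abs_of_nonneg (by linarith : (0:ℝ) ≤ b - m),
          sub_self, abs_zero]
      rw [hp₁, hp₃]; field_simp; ring
  · -- lower bound for all P
    rintro P ⟨hPprob, hPsupp, hPmean, hPmad⟩
    haveI : IsProbabilityMeasure P := hPprob
    have hae : ∀ᵐ x ∂P, x ∈ Set.Icc a b := by
      rw [ae_iff]
      exact hPsupp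
    obtain ⟨C, hC⟩ := isCompact_Icc.exists_bound_of_continuousOn hcont
    have hFcont : Continuous (fun x => f (φ x)) := hcont.comp_continuous hφcont hφmem
    have hFint : Integrable (fun x => f (φ x)) P :=
      Integrable.mono' (integrable_const C) hFcont.aestronglyMeasurable
        (ae_of_all _ fun x => hC (φ x) (hφmem x))
    have haef : (fun x => f (φ x)) =ᵐ[P] f := by
      filter_upwards [hae] with x hx
      rw [hφeq x hx]
    have hfint : Integrable f P := hFint.congr haef
    have hφb : ∀ x, ‖φ x‖ ≤ max |a| |b| := by
      intro x
      have h := hφmem x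
      rw [Real.norm_eq_abs, abs_le]
      constructor
      · have := neg_abs_le a
        have := le_max_left |a| |b|
        linarith [h.1]
      · have := le_abs_self b
        have := le_max_right |a| |b|
        linarith [h.2]
    have hφint : Integrable φ P :=
      Integrable.mono' (integrable_const _) hφcont.aestronglyMeasurable (ae_of_all _ hφb)
    have hidint : Integrable (fun x => x) P := by
      apply hφint.congr
      filter_upwards [hae] with x hx
      rw [hφeq x hx]
    have habsint : Integrable (fun x => |x - m|) P := (hidint.sub (integrable_const m)).abs
    have hlinint : Integrable (fun x => c * (x - m)) P :=
      (hidint.sub (integrable_const m)).const_mul c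
    have hint1 : Integrable (fun x => f m + c * (x - m)) P :=
      (integrable_const (f m)).add hlinint
    have hint2 : Integrable (fun x => e * |x - m|) P := habsint.const_mul e
    have hGint : Integrable (fun x => f m + c * (x - m) + e * |x - m|) P := hint1.add hint2
    have hmono : (∫ x, (f m + c * (x - m) + e * |x - m|) ∂P) ≤ ∫ x, f x ∂P := by
      apply integral_mono_ae hGint hfint
      filter_upwards [hae] with x hx
      exact hpoint x hx
    have hGval : (∫ x, (f m + c * (x - m) + e * |x - m|) ∂P) = f m + e * d := by
      have h1 : (∫ x, (f m + c * (x - m) + e * |x - m|) ∂P)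
          = (∫ x, (f m + c * (x - m)) ∂P) + ∫ x, e * |x - m| ∂P :=
        integral_add hint1 hint2
      have h2 : (∫ x, (f m + c * (x - m)) ∂P) = (∫ x, (f m : ℝ) ∂P) + ∫ x, c * (x - m) ∂P :=
        integral_add (integrable_const _) hlinint
      have h3 : (∫ x, c * (x - m) ∂P) = c * ∫ x, (x - m) ∂P := integral_const_mul _ _
      have h4 : (∫ x, e * |x - m| ∂P) = e * ∫ x, |x - m| ∂P := integral_const_mul _ _
      have h5 : (∫ x, (x - m) ∂P) = (∫ x, x ∂P) - ∫ x, (m : ℝ) ∂P :=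
        integral_sub hidint (integrable_const m)
      rw [h1, h2, h3, h4, h5, integral_const, integral_const, hPmean, hPmad]
      simp only [measure_univ, probReal_univ, ENNReal.toReal_one, one_smul, smul_eq_mul, one_mul]
      ring
    rw [hval]
    rw [hGval] at hmono
    exact hmono
  · -- integral against Pstar
    rw [show Pstar = ENNReal.ofReal p₁ • Measure.dirac a + ENNReal.ofReal p₂ • Measure.dirac m +
      ENNReal.ofReal p₃ • Measure.dirac b from rfl,
      integral_three p₁ p₂ p₃ hp₁0 hp₂0 hp₃0 a m b f]
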